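/- For all real numbers x, y with 0 ≤ x ≤ 1 and 0 ≤ y ≤ 1, and every positive real n, we have (1 - x*y)^n ≤ 1 - x + exp(-y*n). -/
import Mathlib

theorem stmt0 (x y : ℝ) (hx0 : 0 ≤ x) (hx1 : x ≤ 1) (hy0 : 0 ≤ y) (hy1 : y ≤ 1)
    (n : ℝ) (hn : 0 < n) :
    (1 - x * y) ^ n ≤ 1 - x + Real.exp (-y * n) := by
  have hxy0 : 0 ≤ x * y := mul_nonneg hx0 hy0
  have hxy1 : x * y ≤ 1 := mul_le_one₀ hx1 hy0 hy1
  have h1 : (1 : ℝ) - x * y ≤ Real.exp (-(x * y)) := by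
    have := Real.add_one_le_exp (-(x * y)); linarith
  have h2 : (1 - x * y) ^ n ≤ Real.exp (-(x * y)) ^ n :=
    Real.rpow_le_rpow (by linarith) h1 hn.le
  have h3 : Real.exp (-(x * y)) ^ n = Real.exp (-(x * y) * n) :=
    (Real.exp_mul _ _).symm
  -- convexity of exp
  have hconv := convexOn_exp.2 (Set.mem_univ (0 : ℝ)) (Set.mem_univ (-y * n))
    (by linarith : (0:ℝ) ≤ 1 - x) hx0 (by ring)
  simp only [smul_eq_mul, mul_zero, zero_add, Real.exp_zero, mul_one] at hconv
  have heq : -(x * y) * n = x * (-y * n) := by ring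
  have hexp : Real.exp (-y * n) ≤ 1 := Real.exp_le_one_iff.2 (by nlinarith)
  have hpos : 0 < Real.exp (-y * n) := Real.exp_pos _
  calc (1 - x * y) ^ n ≤ Real.exp (-(x * y) * n) := h3 ▸ h2
    _ = Real.exp (x * (-y * n)) := by rw [heq]
    _ ≤ (1 - x) + x * Real.exp (-y * n) := hconv
    _ ≤ 1 - x + Real.exp (-y * n) := by nlinarith
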